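/- Every skew-symmetric integer matrix S of even size 2n×2n is congruent over ℤ to a block diagonal matrix: there exists U ∈ GL_{2n}(ℤ) such that Uᵀ S U is the direct sum of n blocks [[0, k_i],[-k_i, 0]] for some integers k_1,...,k_n. -/

import Mathlib

open Matrix


abbrev SkewAux.Idx (n : ℕ) := Fin n × Fin 2

namespace SkewAux

def Good (n : ℕ) (S : Matrix (Idx n) (Idx n) ℤ) : Prop :=
  ∃ U : Matrix (Fin n × Fin 2) (Fin n × Fin 2) ℤ, IsUnit U.det ∧
    ∃ k : Fin n → ℤ, ∀ (i j : Fin n) (a b : Fin 2),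
      (Uᵀ * S * U) (i, a) (j, b) =
        if i = j then
          (if a = 0 ∧ b = 1 then k i else if a = 1 ∧ b = 0 then -(k i) else 0)
        else 0

lemma good_congr {n : ℕ} {S V : Matrix (Idx n) (Idx n) ℤ} (hV : IsUnit V.det)
    (h : Good n (Vᵀ * S * V)) : Good n S := by
  obtain ⟨U, hU, k, hk⟩ := h
  refine ⟨V * U, by rw [det_mul]; exact hV.mul hU, k, fun i j a b => ?_⟩
  have : (V * U)ᵀ * S * (V * U) = Uᵀ * (Vᵀ * S * V) * U := by
    simp [Matrix.transpose_mul, Matrix.mul_assoc]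
  rw [this]; exact hk i j a b

lemma skew_congr {n : ℕ} {S U : Matrix (Idx n) (Idx n) ℤ} (hS : Sᵀ = -S) :
    (Uᵀ * S * U)ᵀ = -(Uᵀ * S * U) := by
  simp [Matrix.transpose_mul, hS, Matrix.mul_assoc]

lemma skew_apply {n : ℕ} {S : Matrix (Idx n) (Idx n) ℤ} (hS : Sᵀ = -S)
    (u v : Idx n) : S v u = -S u v := by
  have := congrFun (congrFun hS u) v
  simpa using this

lemma skew_diag {n : ℕ} {S : Matrix (Idx n) (Idx n) ℤ} (hS : Sᵀ = -S)
    (u : Idx n) : S u u = 0 := by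
  have := skew_apply hS u u; omega

lemma sum_two {n : ℕ} (p q : Idx n) (hpq : p ≠ q) (F : Idx n → ℤ)
    (hF : ∀ k, k ≠ p → k ≠ q → F k = 0) : ∑ k, F k = F p + F q := by
  rw [← Finset.sum_subset (Finset.subset_univ ({p, q} : Finset (Idx n)))]
  · rw [Finset.sum_pair hpq]
  · intro x _ hx
    simp only [Finset.mem_insert, Finset.mem_singleton] at hx
    push_neg at hx
    exact hF x hx.1 hx.2

/-- congruence by a permutation. -/
lemma swap_congr {n : ℕ} (σ : Equiv.Perm (Idx n)) (S : Matrix (Idx n) (Idx n) ℤ) :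
    ∃ U : Matrix (Idx n) (Idx n) ℤ, IsUnit U.det ∧
      ∀ r c, (Uᵀ * S * U) r c = S (σ r) (σ c) := by
  set U : Matrix (Idx n) (Idx n) ℤ := fun i j => if i = σ j then 1 else 0 with hUdef
  have hUS : ∀ i l, (Uᵀ * S) i l = S (σ i) l := by
    intro i l
    rw [Matrix.mul_apply]
    have step : (∑ k, Uᵀ i k * S k l) = ∑ k, (if k = σ i then S k l else 0) := by
      apply Finset.sum_congr rfl; intro k _
      by_cases h : k = σ i
      · simp only [Matrix.transpose_apply]; simp [hUdef, h]
      · simp only [Matrix.transpose_apply]; simp [hUdef, h]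
    rw [step, Finset.sum_ite_eq' Finset.univ (σ i) (fun k => S k l)]
    simp
  have hfull : ∀ r c, (Uᵀ * S * U) r c = S (σ r) (σ c) := by
    intro r c
    rw [Matrix.mul_apply]
    have step : (∑ l, (Uᵀ * S) r l * U l c) = ∑ l, (if l = σ c then S (σ r) l else 0) := by
      apply Finset.sum_congr rfl; intro l _
      rw [hUS]
      by_cases h : l = σ c
      · simp [hUdef, h]
      · simp [hUdef, h]
    rw [step, Finset.sum_ite_eq' Finset.univ (σ c) (fun l => S (σ r) l)]
    simp
  have hinv : U * Uᵀ = 1 := by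
    ext i j
    rw [Matrix.mul_apply]
    have step : (∑ k, U i k * Uᵀ k j)
        = ∑ k, (if k = σ.symm i then (if j = σ k then (1:ℤ) else 0) else 0) := by
      apply Finset.sum_congr rfl; intro k _
      have hT : Uᵀ k j = if j = σ k then (1:ℤ) else 0 := by
        simp only [Matrix.transpose_apply]; simp [hUdef]
      rw [hT]
      by_cases h : i = σ k
      · have hk : k = σ.symm i := by rw [h]; simp
        rw [hk]
        simp [hUdef]
      · have hk : k ≠ σ.symm i := fun hk => h (by rw [hk]; simp)
        simp [hUdef, h, hk]
    rw [step, Finset.sum_ite_eq' Finset.univ (σ.symm i)]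
    simp [Matrix.one_apply, eq_comm]
  exact ⟨U, isUnit_det_of_right_inverse hinv, hfull⟩

/-- congruence by a shear `1 + N` where `N` has nonzero entries only in rows
`(0,0)` and `(0,1)`, given by `f` and `g`. -/
lemma shear_congr {n : ℕ} (S : Matrix (Idx (n+1)) (Idx (n+1)) ℤ) (f g : Idx (n+1) → ℤ)
    (hf0 : f (0,0) = 0) (hf1 : f (0,1) = 0) (hg0 : g (0,0) = 0) (hg1 : g (0,1) = 0) :
    ∃ U : Matrix (Idx (n+1)) (Idx (n+1)) ℤ, IsUnit U.det ∧
      ∀ r c, (Uᵀ * S * U) r c =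
        S r c + f r * S (0,0) c + g r * S (0,1) c + S r (0,0) * f c + S r (0,1) * g c
        + f r * (S (0,0) (0,0) * f c + S (0,0) (0,1) * g c)
        + g r * (S (0,1) (0,0) * f c + S (0,1) (0,1) * g c) := by
  classical
  set p₀ : Idx (n+1) := (0,0) with hp0
  set p₁ : Idx (n+1) := (0,1) with hp1
  have hne : p₀ ≠ p₁ := by
    intro h
    have h2 : (0 : Fin 2) = 1 := congrArg Prod.snd h
    exact absurd h2 (by decide)
  set N : Matrix (Idx (n+1)) (Idx (n+1)) ℤ :=
    fun k c => if k = p₀ then f c else if k = p₁ then g c else 0 with hN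
  have hNcol : ∀ k, N k p₀ = 0 ∧ N k p₁ = 0 := by
    intro k
    constructor <;> · simp only [hN]; split_ifs <;> simp [hf0, hf1, hg0, hg1]
  have hMN : ∀ (M : Matrix (Idx (n+1)) (Idx (n+1)) ℤ) r c,
      (M * N) r c = M r p₀ * f c + M r p₁ * g c := by
    intro M r c
    rw [Matrix.mul_apply, sum_two p₀ p₁ hne _ (fun k hk0 hk1 => by simp [hN, hk0, hk1])]
    simp [hN, hne, hne.symm]
  have hNM : ∀ (M : Matrix (Idx (n+1)) (Idx (n+1)) ℤ) r c,
      (Nᵀ * M) r c = f r * M p₀ c + g r * M p₁ c := by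
    intro M r c
    rw [Matrix.mul_apply, sum_two p₀ p₁ hne _
      (fun k hk0 hk1 => by simp only [Matrix.transpose_apply]; simp [hN, hk0, hk1])]
    simp only [Matrix.transpose_apply]; simp [hN, hne, hne.symm]
  have hNN : N * N = 0 := by
    ext r c
    rw [hMN]
    simp [(hNcol r).1, (hNcol r).2]
  have hinv : (1 + N) * (1 - N) = 1 := by
    have h : (1 + N) * (1 - N) = 1 - N * N := by noncomm_ring
    rw [h, hNN, sub_zero]
  refine ⟨1 + N, isUnit_det_of_right_inverse hinv, fun r c => ?_⟩
  have expand : (1 + N)ᵀ * S * (1 + N)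
      = S + Nᵀ * S + (S * N + (Nᵀ * S) * N) := by
    rw [Matrix.transpose_add, Matrix.transpose_one]
    noncomm_ring
  rw [expand]
  simp only [Matrix.add_apply]
  rw [hMN, hMN, hNM, hNM, hNM]
  ring

end SkewAux
namespace SkewAux

def spl (n : ℕ) : (Fin (n+1) × Fin 2) ≃ (Fin 2 ⊕ (Fin n × Fin 2)) where
  toFun p := Fin.cases (Sum.inl p.2) (fun i' => Sum.inr (i', p.2)) p.1
  invFun q := Sum.elim (fun x => (0, x)) (fun p => (p.1.succ, p.2)) q
  left_inv := by rintro ⟨i, x⟩; induction i using Fin.cases <;> simp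
  right_inv := by rintro (x | ⟨i, x⟩) <;> simp

@[simp] lemma spl_zero (n : ℕ) (x : Fin 2) : spl n (0, x) = Sum.inl x := rfl
@[simp] lemma spl_succ (n : ℕ) (i : Fin n) (x : Fin 2) :
    spl n (i.succ, x) = Sum.inr (i, x) := by simp [spl]
@[simp] lemma spl_symm_inl (n : ℕ) (x : Fin 2) : (spl n).symm (Sum.inl x) = (0, x) := rfl
@[simp] lemma spl_symm_inr (n : ℕ) (p : Fin n × Fin 2) :
    (spl n).symm (Sum.inr p) = (p.1.succ, p.2) := rfl

lemma split {n : ℕ} (IH : ∀ D : Matrix (Idx n) (Idx n) ℤ, Dᵀ = -D → Good n D)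
    (S : Matrix (Idx (n+1)) (Idx (n+1)) ℤ) (hS : Sᵀ = -S)
    (h0 : ∀ c : Idx (n+1), c ≠ (0,0) → c ≠ (0,1) → S (0,0) c = 0)
    (h1 : ∀ c : Idx (n+1), c ≠ (0,0) → c ≠ (0,1) → S (0,1) c = 0) :
    Good (n+1) S := by
  classical
  set a : ℤ := S (0,0) (0,1) with ha
  set e := spl n with he
  set A : Matrix (Fin 2) (Fin 2) ℤ :=
    fun x y => if x = 0 ∧ y = 1 then a else if x = 1 ∧ y = 0 then -a else 0 with hA
  set D : Matrix (Idx n) (Idx n) ℤ :=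
    fun p q => S (p.1.succ, p.2) (q.1.succ, q.2) with hD
  have hsne : ∀ (i : Fin n) (x : Fin 2), ((i.succ, x) : Idx (n+1)) ≠ (0, 0) ∧
      ((i.succ, x) : Idx (n+1)) ≠ (0, 1) := by
    intro i x
    constructor <;> · intro h; exact Fin.succ_ne_zero i (congrArg Prod.fst h)
  have hrow : ∀ (x : Fin 2) (c : Idx (n+1)), c ≠ (0,0) → c ≠ (0,1) → S (0,x) c = 0 := by
    intro x c hc0 hc1
    fin_cases x
    · exact h0 c hc0 hc1
    · exact h1 c hc0 hc1
  have d00 : S (0,0) (0,0) = 0 := skew_diag hS _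
  have d11 : S (0,1) (0,1) = 0 := skew_diag hS _
  have d10 : S (0,1) (0,0) = -a := skew_apply hS _ _
  have hT : S.submatrix (e.symm) (e.symm) = fromBlocks A 0 0 D := by
    ext p q
    cases p with
    | inl x =>
      cases q with
      | inl y =>
        simp only [Matrix.submatrix_apply, he, spl_symm_inl, fromBlocks_apply₁₁]
        fin_cases x <;> fin_cases y <;> simp_all [hA]
      | inr q =>
        simp only [Matrix.submatrix_apply, he, spl_symm_inl, spl_symm_inr, fromBlocks_apply₁₂,
          Matrix.zero_apply]
        exact hrow _ _ (hsne q.1 q.2).1 (hsne q.1 q.2).2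
    | inr p =>
      cases q with
      | inl y =>
        simp only [Matrix.submatrix_apply, he, spl_symm_inl, spl_symm_inr, fromBlocks_apply₂₁,
          Matrix.zero_apply]
        rw [skew_apply hS, hrow _ _ (hsne p.1 p.2).1 (hsne p.1 p.2).2, neg_zero]
      | inr q => rfl
  have hDskew : Dᵀ = -D := by
    ext p q
    simp only [Matrix.transpose_apply, Matrix.neg_apply, hD]
    exact skew_apply hS _ _
  obtain ⟨U', hU', k', hk'⟩ := IH D hDskew
  set W : Matrix (Fin 2 ⊕ Idx n) (Fin 2 ⊕ Idx n) ℤ := fromBlocks 1 0 0 U' with hW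
  set U : Matrix (Idx (n+1)) (Idx (n+1)) ℤ := W.submatrix e e with hU
  have hdet : IsUnit U.det := by
    rw [hU, Matrix.det_submatrix_equiv_self, hW, Matrix.det_fromBlocks_zero₂₁, Matrix.det_one,
      one_mul]
    exact hU'
  have hSsub : S = (fromBlocks A 0 0 D).submatrix e e := by
    rw [← hT, Matrix.submatrix_submatrix]
    rw [Equiv.symm_comp_self, Matrix.submatrix_id_id]
  have hWt : Wᵀ = fromBlocks 1 0 0 U'ᵀ := by
    rw [hW, fromBlocks_transpose]
    simp
  have hprod : Uᵀ * S * U = (fromBlocks A 0 0 (U'ᵀ * D * U')).submatrix e e := by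
    rw [hU, hSsub, Matrix.transpose_submatrix, hWt]
    rw [Matrix.submatrix_mul_equiv, Matrix.submatrix_mul_equiv]
    have hmm : (fromBlocks 1 0 0 U'ᵀ) * (fromBlocks A 0 0 D) * W
        = fromBlocks A 0 0 (U'ᵀ * D * U') := by
      rw [hW]
      simp [fromBlocks_multiply, Matrix.mul_assoc]
    rw [hmm]
  refine ⟨U, hdet, Fin.cases a k', fun i j x y => ?_⟩
  rw [hprod]
  induction i using Fin.cases with
  | zero =>
    induction j using Fin.cases with
    | zero =>
      simp only [Matrix.submatrix_apply, he, spl_zero, fromBlocks_apply₁₁, if_pos rfl]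
      simp [hA]
    | succ j' =>
      simp only [Matrix.submatrix_apply, he, spl_zero, spl_succ, fromBlocks_apply₁₂,
        Matrix.zero_apply]
      rw [if_neg (Fin.succ_ne_zero j').symm]
  | succ i' =>
    induction j using Fin.cases with
    | zero =>
      simp only [Matrix.submatrix_apply, he, spl_zero, spl_succ, fromBlocks_apply₂₁,
        Matrix.zero_apply]
      rw [if_neg (Fin.succ_ne_zero i')]
    | succ j' =>
      simp only [Matrix.submatrix_apply, he, spl_succ, fromBlocks_apply₂₂]
      rw [hk' i' j' x y]
      by_cases hij : i' = j'
      · subst hij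
        simp
      · rw [if_neg hij, if_neg (fun h => hij (Fin.succ_injective _ h))]

end SkewAux
namespace SkewAux

lemma natAbs_emod_lt (x a : ℤ) (h : a ≠ 0) : (x % a).natAbs < a.natAbs := by
  have h1 := Int.emod_nonneg x h
  have h2 := Int.emod_lt x h
  omega

lemma reduce {n : ℕ} (IH : ∀ D : Matrix (Idx n) (Idx n) ℤ, Dᵀ = -D → Good n D) :
    ∀ m : ℕ, ∀ S : Matrix (Idx (n+1)) (Idx (n+1)) ℤ, Sᵀ = -S →
      S (0,0) (0,1) ≠ 0 → (S (0,0) (0,1)).natAbs ≤ m → Good (n+1) S := by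
  intro m
  induction m using Nat.strong_induction_on with
  | _ m ihm =>
  intro S hS ha0 ham
  have hne01 : ((0,0) : Idx (n+1)) ≠ (0,1) := by
    intro h
    have h2 : (0 : Fin 2) = 1 := congrArg Prod.snd h
    exact absurd h2 (by decide)
  have d10 : S (0,1) (0,0) = -S (0,0) (0,1) := skew_apply hS _ _
  have d00 : S (0,0) (0,0) = 0 := skew_diag hS _
  have d11 : S (0,1) (0,1) = 0 := skew_diag hS _
  by_cases hdvd : ∀ c : Idx (n+1), S (0,0) (0,1) ∣ S (0,0) c ∧ S (0,0) (0,1) ∣ S (0,1) c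
  · -- pivot divides both rows: clear them and split
    set f : Idx (n+1) → ℤ :=
      fun c => if c = (0,0) ∨ c = (0,1) then 0 else S (0,1) c / S (0,0) (0,1) with hf
    set g : Idx (n+1) → ℤ :=
      fun c => if c = (0,0) ∨ c = (0,1) then 0 else -(S (0,0) c / S (0,0) (0,1)) with hg
    obtain ⟨U, hU, hform⟩ := shear_congr S f g (by simp [hf]) (by simp [hf])
      (by simp [hg]) (by simp [hg])
    have hS' : (Uᵀ * S * U)ᵀ = -(Uᵀ * S * U) := skew_congr hS
    apply good_congr hU
    apply split IH _ hS'
    · intro c hc0 hc1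
      have hc0' : c ≠ 0 := hc0
      have e3 : g c = -(S (0,0) c / S (0,0) (0,1)) := by simp [hg, hc0, hc1, hc0']
      have e4 : f c = S (0,1) c / S (0,0) (0,1) := by simp [hf, hc0, hc1, hc0']
      rw [hform, e3, e4]
      have e1 : f (0,0) = 0 := by simp [hf]
      have e2 : g (0,0) = 0 := by simp [hg]
      rw [e1, e2, d00]
      have hcan := Int.mul_ediv_cancel' (hdvd c).1
      ring_nf
      ring_nf at hcan
      omega
    · intro c hc0 hc1
      have hc0' : c ≠ 0 := hc0
      have e3 : g c = -(S (0,0) c / S (0,0) (0,1)) := by simp [hg, hc0, hc1, hc0']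
      have e4 : f c = S (0,1) c / S (0,0) (0,1) := by simp [hf, hc0, hc1, hc0']
      rw [hform, e3, e4]
      have e1 : f (0,1) = 0 := by simp [hf]
      have e2 : g (0,1) = 0 := by simp [hg]
      rw [e1, e2, d10, d11]
      have hcan := Int.mul_ediv_cancel' (hdvd c).2
      ring_nf
      ring_nf at hcan
      omega
  · -- some entry not divisible by the pivot: Euclidean step
    push_neg at hdvd
    obtain ⟨c, hc⟩ := hdvd
    have hcp0 : c ≠ (0,0) := by
      rintro rfl
      exact hc (d00 ▸ dvd_zero _) (d10 ▸ (dvd_neg.mpr dvd_rfl))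
    have hcp1 : c ≠ (0,1) := by
      rintro rfl
      exact hc dvd_rfl (d11 ▸ dvd_zero _)
    have h0c : (0 : Idx (n+1)) ≠ c := Ne.symm hcp0
    have h1c : ((0,1) : Idx (n+1)) ≠ c := Ne.symm hcp1
    by_cases hdv0 : S (0,0) (0,1) ∣ S (0,0) c
    case pos =>
      have hx : ¬ S (0,0) (0,1) ∣ S (0,1) c := hc hdv0
      -- bad entry in row (0,1)
      set t : ℤ := S (0,1) c / S (0,0) (0,1) with ht
      set f : Idx (n+1) → ℤ := fun d => if d = c then t else 0 with hf
      obtain ⟨U, hU, hform⟩ := shear_congr S f (fun _ => 0)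
        (by simp [hf, h0c, Ne.symm hcp0]) (by simp [hf, h1c]) rfl rfl
      have hS' : (Uᵀ * S * U)ᵀ = -(Uᵀ * S * U) := skew_congr hS
      have hrc : (Uᵀ * S * U) (0,1) c = S (0,1) c % S (0,0) (0,1) := by
        rw [hform]
        simp only [hf, if_pos rfl, if_neg (Ne.symm hcp0), if_neg (Ne.symm hcp1)]
        rw [d10, d11, ht, Int.emod_def]
        ring
      obtain ⟨W, hW, hswap⟩ := swap_congr (Equiv.swap ((0,0) : Idx (n+1)) c) (Uᵀ * S * U)
      have hS'' : (Wᵀ * (Uᵀ * S * U) * W)ᵀ = -(Wᵀ * (Uᵀ * S * U) * W) := skew_congr hS'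
      have hpiv'' : (Wᵀ * (Uᵀ * S * U) * W) (0,0) (0,1)
          = -(S (0,1) c % S (0,0) (0,1)) := by
        rw [hswap, Equiv.swap_apply_left,
          Equiv.swap_apply_of_ne_of_ne (Ne.symm hne01) (Ne.symm hcp1)]
        rw [skew_apply hS' (0,1) c, hrc]
      have hr0 : -(S (0,1) c % S (0,0) (0,1)) ≠ 0 := by
        simp only [ne_eq, neg_eq_zero]
        exact fun h => hx (Int.dvd_of_emod_eq_zero h)
      have hrlt : (-(S (0,1) c % S (0,0) (0,1))).natAbs < m := by
        rw [Int.natAbs_neg]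
        exact lt_of_lt_of_le (natAbs_emod_lt _ _ ha0) ham
      apply good_congr hU
      apply good_congr hW
      exact ihm _ hrlt _ hS'' (hpiv'' ▸ hr0) (le_of_eq (by rw [hpiv'']))
    case neg =>
      have hx : ¬ S (0,0) (0,1) ∣ S (0,0) c := hdv0
      -- bad entry in row (0,0)
      set t : ℤ := -(S (0,0) c / S (0,0) (0,1)) with ht
      set g : Idx (n+1) → ℤ := fun d => if d = c then t else 0 with hg
      obtain ⟨U, hU, hform⟩ := shear_congr S (fun _ => 0) g rfl rfl
        (by simp [hg, h0c, Ne.symm hcp0]) (by simp [hg, h1c])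
      have hS' : (Uᵀ * S * U)ᵀ = -(Uᵀ * S * U) := skew_congr hS
      have hpiv : (Uᵀ * S * U) (0,0) (0,1) = S (0,0) (0,1) := by
        rw [hform]
        simp [hg, h0c, h1c, Ne.symm hcp0]
      have hrc : (Uᵀ * S * U) (0,0) c = S (0,0) c % S (0,0) (0,1) := by
        rw [hform]
        simp only [hg, if_pos rfl, if_neg (Ne.symm hcp0), if_neg (Ne.symm hcp1)]
        rw [d00, ht, Int.emod_def]
        ring
      obtain ⟨W, hW, hswap⟩ := swap_congr (Equiv.swap ((0,1) : Idx (n+1)) c) (Uᵀ * S * U)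
      have hS'' : (Wᵀ * (Uᵀ * S * U) * W)ᵀ = -(Wᵀ * (Uᵀ * S * U) * W) := skew_congr hS'
      have hpiv'' : (Wᵀ * (Uᵀ * S * U) * W) (0,0) (0,1)
          = S (0,0) c % S (0,0) (0,1) := by
        rw [hswap, Equiv.swap_apply_of_ne_of_ne hne01 (Ne.symm hcp0), Equiv.swap_apply_left, hrc]
      have hr0 : S (0,0) c % S (0,0) (0,1) ≠ 0 := fun h => hx (Int.dvd_of_emod_eq_zero h)
      have hrlt : (S (0,0) c % S (0,0) (0,1)).natAbs < m :=
        lt_of_lt_of_le (natAbs_emod_lt _ _ ha0) ham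
      apply good_congr hU
      apply good_congr hW
      exact ihm _ hrlt _ hS'' (hpiv'' ▸ hr0) (le_of_eq (by rw [hpiv'']))

lemma main : ∀ n (S : Matrix (Idx n) (Idx n) ℤ), Sᵀ = -S → Good n S := by
  intro n
  induction n with
  | zero => exact fun S hS => ⟨1, by simp, fun _ => 0, fun i => i.elim0⟩
  | succ n IH =>
    intro S hS
    have hne01 : ((0,0) : Idx (n+1)) ≠ (0,1) := by
      intro h
      have h2 : (0 : Fin 2) = 1 := congrArg Prod.snd h
      exact absurd h2 (by decide)
    by_cases h : ∀ c : Idx (n+1), c ≠ (0,0) → c ≠ (0,1) → S (0,0) c = 0 ∧ S (0,1) c = 0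
    · exact split IH S hS (fun c h0 h1 => (h c h0 h1).1) (fun c h0 h1 => (h c h0 h1).2)
    · push_neg at h
      obtain ⟨c, hc0, hc1, hc⟩ := h
      by_cases hA : S (0,0) c = 0
      · -- nonzero entry in row (0,1)
        have hy : S (0,1) c ≠ 0 := hc hA
        obtain ⟨W, hW, hswap⟩ := swap_congr (Equiv.swap ((0,0) : Idx (n+1)) c) S
        have hS'' : (Wᵀ * S * W)ᵀ = -(Wᵀ * S * W) := skew_congr hS
        have hpiv : (Wᵀ * S * W) (0,0) (0,1) = -(S (0,1) c) := by
          rw [hswap, Equiv.swap_apply_left,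
            Equiv.swap_apply_of_ne_of_ne (Ne.symm hne01) (Ne.symm hc1)]
          exact skew_apply hS _ _
        apply good_congr hW
        exact reduce IH _ _ hS'' (by rw [hpiv]; simpa using hy) le_rfl
      · obtain ⟨W, hW, hswap⟩ := swap_congr (Equiv.swap ((0,1) : Idx (n+1)) c) S
        have hS'' : (Wᵀ * S * W)ᵀ = -(Wᵀ * S * W) := skew_congr hS
        have hpiv : (Wᵀ * S * W) (0,0) (0,1) = S (0,0) c := by
          rw [hswap, Equiv.swap_apply_of_ne_of_ne hne01 (Ne.symm hc0), Equiv.swap_apply_left]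
        apply good_congr hW
        exact reduce IH _ _ hS'' (by rw [hpiv]; exact hA) le_rfl

end SkewAux


/-- Skew normal form over ℤ: every skew-symmetric integer matrix of even size `2n × 2n`
(indexed here by `Fin n × Fin 2`) is congruent over ℤ to a block diagonal matrix with
`2 × 2` skew-symmetric blocks `[[0, kᵢ], [-kᵢ, 0]]`. -/
theorem skew_symmetric_int_matrix_normal_form (n : ℕ)
    (S : Matrix (Fin n × Fin 2) (Fin n × Fin 2) ℤ) (hS : Sᵀ = -S) :
    ∃ U : Matrix (Fin n × Fin 2) (Fin n × Fin 2) ℤ, IsUnit U.det ∧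
      ∃ k : Fin n → ℤ, ∀ (i j : Fin n) (a b : Fin 2),
        (Uᵀ * S * U) (i, a) (j, b) =
          if i = j then
            (if a = 0 ∧ b = 1 then k i else if a = 1 ∧ b = 0 then -(k i) else 0)
          else 0 := by
  exact SkewAux.main n S hS
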